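/- Let n ≥ 1, p > 2, and α ∈ (-∞, (p-2)/p). Let Ω be a bounded convex domain in ℝⁿ such that ⟨e₁,x⟩ > 0 for every x ∈ Ω, where e₁ is the first standard basis vector. Define φ : Ω → (0,∞) by φ(x) := ⟨e₁,x⟩^{1/α} if α ≠ 0 and φ(x) := e^{⟨e₁,x⟩} if α = 0 (so φ is α-concave in Ω). Suppose u : Ω × [0,∞) → ℝ is positive, u together with its first and second spatial partial derivatives and its time derivative is continuous on Ω × [0,∞), the spatial gradient ∇u(x,t) is nonzero for all (x,t) ∈ Ω × [0,∞), u satisfies the parabolic p-Laplace equation ∂_t u = div(|∇u|^{p-2}∇u) pointwise on Ω × [0,∞), and u(·,0) = φ. Then there exists t > 0 such that u(·,t) is not α-concave in Ω. -/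

import Mathlib

open Set Filter
open scoped Topology

noncomputable section

/-- The admissible function `Φ_α` on `[0,∞)`: `Φ_α(r) = (r^α - 1)/α` for `α ≠ 0`,
`Φ₀(r) = log r`, with `Φ_α(0) = -∞` (we also set the irrelevant value `⊥` for `r < 0`). -/
def Phi (α : ℝ) : ℝ → EReal := fun r =>
  if r ≤ 0 then ⊥
  else if α = 0 then ((Real.log r : ℝ) : EReal)
  else (((r ^ α - 1) / α : ℝ) : EReal)

/-- `f` is `Φ_α`-concave (`α`-concave) on `Ω`. -/
def FConcaveOn {E : Type*} [AddCommGroup E] [Module ℝ E]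
    (F : ℝ → EReal) (Ω : Set E) (f : E → ℝ) : Prop :=
  ∀ x ∈ Ω, ∀ y ∈ Ω, ∀ lam : ℝ, lam ∈ Ioo (0:ℝ) 1 →
    ((1 - lam : ℝ) : EReal) * F (f x) + (lam : EReal) * F (f y)
      ≤ F (f ((1 - lam) • x + lam • y))

lemma aux_fderiv (i0 : Fin n) {h : ℝ → ℝ} {h' : ℝ} {z : EuclideanSpace ℝ (Fin n)}
    (hd : HasDerivAt h h' (z i0)) :
    HasFDerivAt (fun y : EuclideanSpace ℝ (Fin n) => h (y i0))
      (h' • EuclideanSpace.proj (𝕜 := ℝ) i0) z := by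
  have hp : HasFDerivAt (fun y : EuclideanSpace ℝ (Fin n) => y i0)
      (EuclideanSpace.proj (𝕜 := ℝ) i0) z := (EuclideanSpace.proj (𝕜 := ℝ) i0).hasFDerivAt
  exact hd.comp_hasFDerivAt z hp

lemma aux_gradient (i0 : Fin n) {h : ℝ → ℝ} {h' : ℝ} {z : EuclideanSpace ℝ (Fin n)}
    (hd : HasDerivAt h h' (z i0)) :
    HasGradientAt (fun y : EuclideanSpace ℝ (Fin n) => h (y i0))
      (h' • EuclideanSpace.single i0 (1:ℝ)) z := by
  rw [hasGradientAt_iff_hasFDerivAt]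
  refine (aux_fderiv i0 hd).congr_fderiv ?_
  ext w
  simp [EuclideanSpace.inner_single_left, real_inner_smul_left, mul_comm]

/-- The divergence-form RHS of the p-Laplace equation evaluated on a function that,
on an open set `s` of points with positive first coordinate, is `h` of the first
coordinate. -/
lemma aux_slice (p : ℝ) (i0 : Fin n) {f : EuclideanSpace ℝ (Fin n) → ℝ}
    {s : Set (EuclideanSpace ℝ (Fin n))} (hs : IsOpen s)
    {x : EuclideanSpace ℝ (Fin n)} (hx : x ∈ s)
    (hspos : ∀ y ∈ s, 0 < y i0)
    {h h1 q : ℝ → ℝ} {q1 : ℝ}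
    (hfs : ∀ y ∈ s, f y = h (y i0))
    (hd : ∀ t, 0 < t → HasDerivAt h (h1 t) t)
    (hq : ∀ t, 0 < t → |h1 t| ^ (p - 2) * h1 t = q t)
    (hqd : HasDerivAt q q1 (x i0)) :
    (∑ i : Fin n,
      fderiv ℝ (fun y =>
          ‖gradient f y‖ ^ (p - 2) * fderiv ℝ f y (EuclideanSpace.single i 1))
        x (EuclideanSpace.single i 1)) = q1 := by
  -- On s, gradient f y = h1 (y i0) • e_{i0} and fderiv f y v = h1 (y i0) * v i0.
  have hmem : ∀ y ∈ s, s ∈ 𝓝 y := fun y hy => hs.mem_nhds hy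
  have hfev : ∀ y ∈ s, f =ᶠ[𝓝 y] fun z => h (z i0) := fun y hy =>
    eventually_of_mem (hmem y hy) hfs
  have hfd : ∀ y ∈ s, HasFDerivAt f (h1 (y i0) • EuclideanSpace.proj (𝕜 := ℝ) i0) y := by
    intro y hy
    exact (aux_fderiv i0 (hd _ (hspos y hy))).congr_of_eventuallyEq (hfev y hy)
  have hgrad : ∀ y ∈ s, gradient f y = h1 (y i0) • EuclideanSpace.single i0 (1:ℝ) := by
    intro y hy
    have : HasGradientAt f (h1 (y i0) • EuclideanSpace.single i0 (1:ℝ)) y := by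
      rw [hasGradientAt_iff_hasFDerivAt]
      have := aux_gradient i0 (hd _ (hspos y hy))
      rw [hasGradientAt_iff_hasFDerivAt] at this
      exact this.congr_of_eventuallyEq (hfev y hy)
    exact this.gradient
  have hgradnorm : ∀ y ∈ s, ‖gradient f y‖ = |h1 (y i0)| := by
    intro y hy
    rw [hgrad y hy, norm_smul, EuclideanSpace.norm_single, Real.norm_eq_abs, norm_one, mul_one]
  have hfdval : ∀ y ∈ s, ∀ i : Fin n,
      fderiv ℝ f y (EuclideanSpace.single i 1) = h1 (y i0) * (if i = i0 then 1 else 0) := by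
    intro y hy i
    rw [(hfd y hy).fderiv]
    simp only [ContinuousLinearMap.smul_apply, smul_eq_mul, EuclideanSpace.proj]
    rcases eq_or_ne i i0 with rfl | hi
    · simp [EuclideanSpace.single_apply]
    · simp [EuclideanSpace.single_apply, hi, Ne.symm hi]
  -- summand functions
  have hsummand : ∀ i : Fin n, ∀ y ∈ s,
      ‖gradient f y‖ ^ (p - 2) * fderiv ℝ f y (EuclideanSpace.single i 1)
        = (if i = i0 then q (y i0) else 0) := by
    intro i y hy
    rw [hgradnorm y hy, hfdval y hy i]
    by_cases hi : i = i0
    · rw [if_pos hi, if_pos hi, mul_one]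
      exact hq _ (hspos y hy)
    · simp [hi]
  rw [Finset.sum_eq_single i0]
  · -- the i0 term
    have hev : (fun y => ‖gradient f y‖ ^ (p - 2) *
        fderiv ℝ f y (EuclideanSpace.single i0 1)) =ᶠ[𝓝 x] fun y => q (y i0) := by
      filter_upwards [hmem x hx] with y hy
      simpa using hsummand i0 y hy
    rw [hev.fderiv_eq, (aux_fderiv i0 hqd).fderiv]
    simp [EuclideanSpace.proj, EuclideanSpace.single_apply]
  · intro i _ hi
    have hev : (fun y => ‖gradient f y‖ ^ (p - 2) *
        fderiv ℝ f y (EuclideanSpace.single i 1)) =ᶠ[𝓝 x] fun _ => (0:ℝ) := by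
      filter_upwards [hmem x hx] with y hy
      simpa [hi] using hsummand i y hy
    rw [hev.fderiv_eq, fderiv_fun_const]
    simp
  · intro hmem'
    exact absurd (Finset.mem_univ i0) hmem'

lemma aux_strictConvex {γ : ℝ} (hγ : γ < 0 ∨ 1 < γ) :
    StrictConvexOn ℝ (Ioi (0:ℝ)) (fun t : ℝ => t ^ γ) := by
  rcases hγ with hγ | hγ
  · apply strictConvexOn_of_deriv2_pos (convex_Ioi 0)
    · intro t ht
      exact (Real.continuousAt_rpow_const t γ (Or.inl (ne_of_gt ht))).continuousWithinAt
    · intro t ht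
      rw [interior_Ioi] at ht
      have hev : deriv (fun s : ℝ => s ^ γ) =ᶠ[𝓝 t] fun s => γ * s ^ (γ - 1) := by
        filter_upwards [isOpen_Ioi.mem_nhds ht] with s hs
        exact Real.deriv_rpow_const s γ
      have h2 : deriv^[2] (fun s : ℝ => s ^ γ) t
          = deriv (fun s => γ * s ^ (γ - 1)) t := by
        simp only [Function.iterate_succ, Function.iterate_zero, Function.comp_apply, id_eq]
        exact hev.deriv_eq
      rw [h2, deriv_const_mul _ ((Real.differentiableAt_rpow_const_of_ne (γ-1) (ne_of_gt ht))),
        Real.deriv_rpow_const t (γ - 1)]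
      have : 0 < t ^ (γ - 1 - 1) := Real.rpow_pos_of_pos ht _
      have hgg : 0 < γ * (γ - 1) := mul_pos_of_neg_of_neg hγ (by linarith)
      nlinarith [mul_pos hgg this]
  · exact strictConvexOn_rpow hγ |>.subset (Ioi_subset_Ici le_rfl) (convex_Ioi 0)

/-- Main engine: from the PDE at time 0 with explicit slice data, plus
strict convexity of the "time-derivative of the concavity defect", derive a
contradiction with concavity at all positive times. -/
lemma aux_main {n : ℕ} (i0 : Fin n) (p : ℝ) (F : ℝ → EReal)
    (Ω : Set (EuclideanSpace ℝ (Fin n))) (hΩopen : IsOpen Ω)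
    (hΩpos : ∀ x ∈ Ω, 0 < x i0)
    (u : EuclideanSpace ℝ (Fin n) → ℝ → ℝ)
    (hu_pos : ∀ x ∈ Ω, ∀ t ∈ Ici (0:ℝ), 0 < u x t)
    (h h1 q q1f hfun Φ1 : ℝ → ℝ)
    (hu0 : ∀ z ∈ Ω, u z 0 = h (z i0))
    (hd : ∀ t, 0 < t → HasDerivAt h (h1 t) t)
    (hq : ∀ t, 0 < t → |h1 t| ^ (p - 2) * h1 t = q t)
    (hqd : ∀ t, 0 < t → HasDerivAt q (q1f t) t)
    (hq1ne : ∀ t, 0 < t → q1f t ≠ 0)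
    (hpde0 : ∀ x ∈ Ω,
      derivWithin (fun s => u x s) (Ici 0) 0 =
        ∑ i : Fin n,
          fderiv ℝ (fun y =>
              ‖gradient (fun z => u z 0) y‖ ^ (p - 2) *
                fderiv ℝ (fun z => u z 0) y (EuclideanSpace.single i 1))
            x (EuclideanSpace.single i 1))
    (hfd : ∀ r, 0 < r → HasDerivAt hfun (Φ1 r) r)
    (hF : ∀ r, 0 < r → F r = ((hfun r : ℝ) : EReal))
    (conc : ∀ t, 0 < t → FConcaveOn F Ω (fun x => u x t))
    (a xm yp : EuclideanSpace ℝ (Fin n))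
    (haΩ : a ∈ Ω) (hxmΩ : xm ∈ Ω) (hypΩ : yp ∈ Ω)
    (hmid : (1 - (1/2 : ℝ)) • xm + (1/2 : ℝ) • yp = a)
    (hD0 : hfun (h (a i0)) -
      ((1/2) * hfun (h (xm i0)) + (1/2) * hfun (h (yp i0))) = 0)
    (hstrict : Φ1 (h (a i0)) * q1f (a i0) <
      (1/2) * (Φ1 (h (xm i0)) * q1f (xm i0)) +
      (1/2) * (Φ1 (h (yp i0)) * q1f (yp i0))) : False := by
  -- time derivative of u z at 0, for z ∈ Ω
  have hder : ∀ z ∈ Ω, HasDerivWithinAt (fun s => u z s) (q1f (z i0)) (Ici (0:ℝ)) 0 := by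
    intro z hz
    have hval : derivWithin (fun s => u z s) (Ici 0) 0 = q1f (z i0) := by
      rw [hpde0 z hz]
      exact aux_slice p i0 hΩopen hz hΩpos (fun y hy => hu0 y hy) hd hq
        (hqd _ (hΩpos z hz))
    have hdiff : DifferentiableWithinAt ℝ (fun s => u z s) (Ici 0) 0 := by
      by_contra hnot
      exact hq1ne _ (hΩpos z hz)
        (hval ▸ derivWithin_zero_of_not_differentiableWithinAt hnot)
    exact hval ▸ hdiff.hasDerivWithinAt
  -- composition with hfun
  have hcomp : ∀ z ∈ Ω, HasDerivWithinAt (fun t => hfun (u z t))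
      (Φ1 (h (z i0)) * q1f (z i0)) (Ici (0:ℝ)) 0 := by
    intro z hz
    have hpos0 : 0 < u z 0 := hu_pos z hz 0 (mem_Ici.mpr le_rfl)
    have := (hfd (u z 0) hpos0).comp_hasDerivWithinAt 0 (hder z hz)
    rw [hu0 z hz] at this
    exact this
  -- the defect function
  set D : ℝ → ℝ := fun t => hfun (u a t) -
    ((1/2) * hfun (u xm t) + (1/2) * hfun (u yp t)) with hD
  set L : ℝ := Φ1 (h (a i0)) * q1f (a i0) -
      ((1/2) * (Φ1 (h (xm i0)) * q1f (xm i0)) +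
       (1/2) * (Φ1 (h (yp i0)) * q1f (yp i0))) with hL
  have hDder : HasDerivWithinAt D L (Ici (0:ℝ)) 0 := by
    exact ((hcomp a haΩ).sub
      (((hcomp xm hxmΩ).const_mul (1/2)).add ((hcomp yp hypΩ).const_mul (1/2))))
  have hLneg : L < 0 := by rw [hL]; linarith
  -- D is nonneg for positive times
  have hDnn : ∀ t, 0 < t → 0 ≤ D t := by
    intro t ht
    have hineq := conc t ht xm hxmΩ yp hypΩ (1/2) ⟨by norm_num, by norm_num⟩
    simp only at hineq
    rw [hmid] at hineq
    have h1pos : 0 < u xm t := hu_pos xm hxmΩ t ht.le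
    have h2pos : 0 < u yp t := hu_pos yp hypΩ t ht.le
    have h3pos : 0 < u a t := hu_pos a haΩ t ht.le
    rw [hF _ h1pos, hF _ h2pos, hF _ h3pos, ← EReal.coe_mul, ← EReal.coe_mul,
      ← EReal.coe_add, EReal.coe_le_coe_iff] at hineq
    simp only [hD]
    linarith
  -- D 0 = 0
  have hD00 : D 0 = 0 := by
    simp only [hD, hu0 a haΩ, hu0 xm hxmΩ, hu0 yp hypΩ]
    exact hD0
  -- slope argument: L ≥ 0, contradiction
  rw [hasDerivWithinAt_iff_tendsto_slope, Ici_sdiff_left] at hDder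
  have hLnn : 0 ≤ L := by
    refine ge_of_tendsto hDder ?_
    filter_upwards [self_mem_nhdsWithin] with t ht
    have ht' : (0:ℝ) < t := ht
    rw [slope_def_field, hD00, sub_zero, sub_zero]
    exact div_nonneg (hDnn t ht') ht'.le
  linarith


set_option maxHeartbeats 1000000 in
/-- disruption of `α`-concavity, `α < (p-2)/p`, for the parabolic
`p`-Laplace equation `∂_t u = div(|∇u|^{p-2}∇u)`: with the `α`-concave initial
datum `φ(x) = ⟨e₁,x⟩^{1/α}` (resp. `e^{⟨e₁,x⟩}` for `α = 0`) on a bounded convex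
domain `Ω` with `⟨e₁,x⟩ > 0` on `Ω`, any positive solution `u` of class `C^{2;1}`
on `Ω × [0,∞)` with nonvanishing spatial gradient fails to be `α`-concave at some
time `t > 0`. -/
theorem stmt19 {n : ℕ} (hn : 0 < n) (p : ℝ) (hp : 2 < p)
    (α : ℝ) (hα : α < (p - 2) / p)
    (Ω : Set (EuclideanSpace ℝ (Fin n)))
    (hΩconv : Convex ℝ Ω) (hΩopen : IsOpen Ω) (hΩne : Ω.Nonempty)
    (hΩbdd : Bornology.IsBounded Ω)
    (hΩpos : ∀ x ∈ Ω, 0 < x ⟨0, hn⟩)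
    (φ : EuclideanSpace ℝ (Fin n) → ℝ)
    (hφ : ∀ x ∈ Ω, φ x =
      if α = 0 then Real.exp (x ⟨0, hn⟩) else (x ⟨0, hn⟩) ^ (1/α))
    (u : EuclideanSpace ℝ (Fin n) → ℝ → ℝ)
    (hu_pos : ∀ x ∈ Ω, ∀ t ∈ Ici (0:ℝ), 0 < u x t)
    (hu_grad : ∀ x ∈ Ω, ∀ t ∈ Ici (0:ℝ), gradient (fun z => u z t) x ≠ 0)
    (hu_cont : ContinuousOn (fun p : EuclideanSpace ℝ (Fin n) × ℝ => u p.1 p.2)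
      (Ω ×ˢ Ici 0))
    (hu_cont1 : ∀ i : Fin n,
      ContinuousOn (fun q : EuclideanSpace ℝ (Fin n) × ℝ =>
        fderiv ℝ (fun y => u y q.2) q.1 (EuclideanSpace.single i 1)) (Ω ×ˢ Ici 0))
    (hu_cont2 : ∀ i j : Fin n,
      ContinuousOn (fun q : EuclideanSpace ℝ (Fin n) × ℝ =>
        fderiv ℝ (fun y => fderiv ℝ (fun z => u z q.2) y (EuclideanSpace.single i 1))
          q.1 (EuclideanSpace.single j 1)) (Ω ×ˢ Ici 0))
    (hu_contt : ContinuousOn (fun q : EuclideanSpace ℝ (Fin n) × ℝ =>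
        derivWithin (fun s => u q.1 s) (Ici 0) q.2) (Ω ×ˢ Ici 0))
    (hu_pde : ∀ x ∈ Ω, ∀ t ∈ Ici (0:ℝ),
      derivWithin (fun s => u x s) (Ici 0) t =
        ∑ i : Fin n,
          fderiv ℝ (fun y =>
              ‖gradient (fun z => u z t) y‖ ^ (p - 2) *
                fderiv ℝ (fun z => u z t) y (EuclideanSpace.single i 1))
            x (EuclideanSpace.single i 1))
    (hu_init : ∀ x ∈ Ω, u x 0 = φ x) :
    ∃ t > (0:ℝ), ¬ FConcaveOn (Phi α) Ω (fun x => u x t) := by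
  by_contra hcon
  push_neg at hcon
  set i0 : Fin n := ⟨0, hn⟩ with hi0
  obtain ⟨a, haΩ⟩ := hΩne
  obtain ⟨r, hr, hball⟩ := Metric.isOpen_iff.mp hΩopen a haΩ
  set δ : ℝ := r/2 with hδdef
  have hδ : 0 < δ := by positivity
  set e0 : EuclideanSpace ℝ (Fin n) := EuclideanSpace.single i0 (1:ℝ) with he0
  set xm : EuclideanSpace ℝ (Fin n) := a - δ • e0 with hxm
  set yp : EuclideanSpace ℝ (Fin n) := a + δ • e0 with hyp
  have hnrm : ‖δ • e0‖ = δ := by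
    rw [norm_smul, he0, EuclideanSpace.norm_single, Real.norm_eq_abs, norm_one,
      abs_of_pos hδ, mul_one]
  have hxmΩ : xm ∈ Ω := by
    apply hball
    rw [Metric.mem_ball, dist_eq_norm, hxm, sub_sub_cancel_left, norm_neg, hnrm]
    rw [hδdef]; linarith
  have hypΩ : yp ∈ Ω := by
    apply hball
    rw [Metric.mem_ball, dist_eq_norm, hyp, add_sub_cancel_left, hnrm]
    rw [hδdef]; linarith
  have hxm0 : xm i0 = a i0 - δ := by
    simp [hxm, he0, PiLp.sub_apply, PiLp.smul_apply, EuclideanSpace.single_apply]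
  have hyp0 : yp i0 = a i0 + δ := by
    simp [hyp, he0, PiLp.add_apply, PiLp.smul_apply, EuclideanSpace.single_apply]
  have hmid : (1 - (1/2 : ℝ)) • xm + (1/2 : ℝ) • yp = a := by
    rw [hxm, hyp]; module
  have hm : 0 < a i0 := hΩpos a haΩ
  have hxmpos : 0 < a i0 - δ := hxm0 ▸ hΩpos xm hxmΩ
  have hyppos : 0 < a i0 + δ := by linarith
  have hp1 : (0:ℝ) < p - 1 := by linarith
  have hpde0 : ∀ x ∈ Ω,
      derivWithin (fun s => u x s) (Ici 0) 0 =
        ∑ i : Fin n,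
          fderiv ℝ (fun y =>
              ‖gradient (fun z => u z 0) y‖ ^ (p - 2) *
                fderiv ℝ (fun z => u z 0) y (EuclideanSpace.single i 1))
            x (EuclideanSpace.single i 1) :=
    fun x hx => hu_pde x hx 0 (mem_Ici.mpr le_rfl)
  by_cases hα0 : α = 0
  · -- exponential case
    subst hα0
    have hu0 : ∀ z ∈ Ω, u z 0 = Real.exp (z i0) := by
      intro z hz; rw [hu_init z hz, hφ z hz, if_pos rfl]
    have hqval : ∀ t : ℝ, 0 < t → |Real.exp t| ^ (p - 2) * Real.exp t
        = Real.exp ((p-1)*t) := by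
      intro t _
      rw [abs_of_pos (Real.exp_pos t), ← Real.exp_mul, ← Real.exp_add]
      ring_nf
    have hexpval : ∀ t : ℝ, (Real.exp t)⁻¹ * ((p-1) * Real.exp ((p-1)*t))
        = (p-1) * Real.exp ((p-2)*t) := by
      intro t
      rw [← Real.exp_neg, ← mul_assoc, mul_comm (Real.exp (-t)) (p-1), mul_assoc,
        ← Real.exp_add]
      ring_nf
    refine aux_main i0 p (Phi 0) Ω hΩopen hΩpos u hu_pos
      Real.exp Real.exp (fun t => Real.exp ((p-1)*t))
      (fun t => (p-1) * Real.exp ((p-1)*t)) Real.log (fun r => r⁻¹)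
      hu0 (fun t _ => Real.hasDerivAt_exp t) hqval
      (fun t _ => ?_) (fun t _ => ne_of_gt (by positivity))
      hpde0 (fun r hr => Real.hasDerivAt_log (ne_of_gt hr))
      (fun r hr => by simp [Phi, not_le.mpr hr])
      (fun t ht => hcon t ht)
      a xm yp haΩ hxmΩ hypΩ hmid ?_ ?_
    · -- derivative of q
      simpa [mul_comm] using (((hasDerivAt_id t).const_mul (p-1)).exp)
    · -- D 0 = 0
      simp only [Real.log_exp, hxm0, hyp0]; ring
    · -- strict inequality
      have hne : (p-2)*(a i0 - δ) ≠ (p-2)*(a i0 + δ) := by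
        intro heq
        have h2 : p - 2 ≠ 0 := by linarith
        have := mul_left_cancel₀ h2 heq
        linarith
      have hconv := strictConvexOn_exp.2 (mem_univ ((p-2)*(a i0 - δ)))
        (mem_univ ((p-2)*(a i0 + δ))) hne
        (by norm_num : (0:ℝ) < 1/2) (by norm_num : (0:ℝ) < 1/2) (by norm_num)
      simp only [smul_eq_mul] at hconv
      rw [show (1/2)*((p-2)*(a i0 - δ)) + (1/2)*((p-2)*(a i0 + δ)) = (p-2)*(a i0)
        from by ring] at hconv
      simp only [hxm0, hyp0]
      rw [hexpval, hexpval, hexpval]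
      nlinarith [hconv, hp1]
  · -- power case
    set β : ℝ := 1/α with hβ
    have hβ0 : β ≠ 0 := one_div_ne_zero hα0
    have hβα : β * α = 1 := one_div_mul_cancel hα0
    have hα1 : α < 1 := by
      have : (p-2)/p < 1 := by rw [div_lt_one (by linarith)]; linarith
      linarith
    have hβ1 : β ≠ 1 := by
      intro h1; rw [h1, one_mul] at hβα; linarith
    have habs : (0:ℝ) < |β| ^ (p-2) := Real.rpow_pos_of_pos (abs_pos.mpr hβ0) _
    have hββpos : 0 < β * (β - 1) := by
      rcases lt_trichotomy α 0 with hneg | h0 | hpos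
      · have hβneg : β < 0 := by rw [hβ]; exact one_div_neg.mpr hneg
        exact mul_pos_of_neg_of_neg hβneg (by linarith)
      · exact absurd h0 hα0
      · have hβpos : 0 < β := by rw [hβ]; exact one_div_pos.mpr hpos
        have hβgt1 : 1 < β := by
          rw [hβ, lt_div_iff₀ hpos]; linarith
        exact mul_pos hβpos (by linarith)
    set c : ℝ := |β| ^ (p-2) * β with hc
    set m' : ℝ := (β-1)*(p-1) with hm'
    set C : ℝ := c * m' with hC
    set γ : ℝ := m' - β with hγdef
    have hu0 : ∀ z ∈ Ω, u z 0 = (z i0) ^ β := by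
      intro z hz; rw [hu_init z hz, hφ z hz, if_neg hα0]
    have hqeq : ∀ t : ℝ, 0 < t → |β * t ^ (β-1)| ^ (p - 2) * (β * t ^ (β-1))
        = c * t ^ m' := by
      intro t ht
      have h2 : (0:ℝ) < t ^ (β-1) := Real.rpow_pos_of_pos ht _
      rw [abs_mul, abs_of_pos h2, Real.mul_rpow (abs_nonneg β) h2.le,
        ← Real.rpow_mul ht.le,
        show m' = (β-1)*(p-2) + (β-1) from by rw [hm']; ring,
        Real.rpow_add ht, hc]
      ring
    have hval : ∀ t : ℝ, 0 < t →
        (t ^ β) ^ (α - 1) * (c * (m' * t ^ (m' - 1))) = C * t ^ γ := by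
      intro t ht
      rw [← Real.rpow_mul ht.le, show β * (α-1) = 1 - β from by
        rw [mul_sub, hβα, mul_one]]
      calc t ^ (1-β) * (c * (m' * t ^ (m' - 1)))
          = (c * m') * (t ^ (1-β) * t ^ (m' - 1)) := by ring
        _ = (c * m') * t ^ ((1-β) + (m' - 1)) := by rw [← Real.rpow_add ht]
        _ = C * t ^ γ := by rw [hC, show (1-β) + (m' - 1) = γ from by
              rw [hγdef]; ring]
    have hCpos : 0 < C := by
      have e : C = |β| ^ (p-2) * (β * (β-1)) * (p-1) := by rw [hC, hc, hm']; ring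
      rw [e]
      exact mul_pos (mul_pos habs hββpos) hp1
    have hγor : γ < 0 ∨ 1 < γ := by
      rcases lt_trichotomy α 0 with hneg | h0 | hpos
      · left
        have hβneg : β < 0 := by rw [hβ]; exact one_div_neg.mpr hneg
        have h' : β * (p-2) < 0 :=
          mul_neg_of_neg_of_pos hβneg (by linarith)
        rw [hγdef, hm']; nlinarith
      · exact absurd h0 hα0
      · right
        have hβpos : 0 < β := by rw [hβ]; exact one_div_pos.mpr hpos
        have hαp : α * p < p - 2 := (lt_div_iff₀ (by linarith : (0:ℝ) < p)).mp hα
        have hkey : β * (α * p) = p := by rw [← mul_assoc, hβα, one_mul]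
        have h2 := mul_lt_mul_of_pos_left hαp hβpos
        rw [hkey] at h2
        rw [hγdef, hm']; nlinarith [h2]
    refine aux_main i0 p (Phi α) Ω hΩopen hΩpos u hu_pos
      (fun t => t ^ β) (fun t => β * t ^ (β-1)) (fun t => c * t ^ m')
      (fun t => c * (m' * t ^ (m' - 1)))
      (fun r => (r ^ α - 1)/α) (fun r => r ^ (α - 1))
      hu0 (fun t ht => Real.hasDerivAt_rpow_const (Or.inl ht.ne')) hqeq
      (fun t ht => HasDerivAt.const_mul c
        (Real.hasDerivAt_rpow_const (Or.inl ht.ne')))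
      (fun t ht => ?_)
      hpde0 (fun r hr => ?_)
      (fun r hr => by simp [Phi, not_le.mpr hr, hα0])
      (fun t ht => hcon t ht)
      a xm yp haΩ hxmΩ hypΩ hmid ?_ ?_
    · -- q1f ≠ 0
      have hm'ne : m' ≠ 0 := by
        rw [hm']
        exact mul_ne_zero (sub_ne_zero.mpr hβ1) (ne_of_gt hp1)
      have hcne : c ≠ 0 := by
        rw [hc]; exact mul_ne_zero (ne_of_gt habs) hβ0
      exact mul_ne_zero hcne (mul_ne_zero hm'ne
        (ne_of_gt (Real.rpow_pos_of_pos ht _)))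
    · -- derivative of hfun
      have := ((Real.hasDerivAt_rpow_const (p := α) (Or.inl hr.ne')).sub_const 1).div_const α
      rw [mul_div_cancel_left₀ _ hα0] at this
      exact this
    · -- D 0 = 0
      have hrw : ∀ t : ℝ, 0 < t → ((t ^ β) ^ α - 1)/α = (t - 1)/α := by
        intro t ht
        rw [← Real.rpow_mul ht.le, hβα, Real.rpow_one]
      simp only [hxm0, hyp0]
      rw [hrw _ hm, hrw _ hxmpos, hrw _ hyppos]
      field_simp
      ring
    · -- strict inequality
      have hsc := aux_strictConvex hγor
      have hconv := hsc.2 (mem_Ioi.mpr hxmpos) (mem_Ioi.mpr hyppos)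
        (by intro heq; linarith [hδ] : a i0 - δ ≠ a i0 + δ)
        (by norm_num : (0:ℝ) < 1/2) (by norm_num : (0:ℝ) < 1/2) (by norm_num)
      simp only [smul_eq_mul] at hconv
      rw [show (1/2)*(a i0 - δ) + (1/2)*(a i0 + δ) = a i0 from by ring] at hconv
      simp only [hxm0, hyp0]
      rw [hval _ hm, hval _ hxmpos, hval _ hyppos]
      nlinarith [mul_lt_mul_of_pos_left hconv hCpos]
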